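/- Let m ≥ 2 and b ∈ ℝ^m with σ_b > 0. The Jacobian of the batch normalization map B^{(β,γ)} at b equals (γ/σ_b)·(I_m − (1/m)·𝟏𝟏ᵀ − (1/m)·B^{(0,1)}(b)·B^{(0,1)}(b)ᵀ), and moreover the two vectors 𝟏/√m and B^{(0,1)}(b)/√m form an orthonormal set in ℝ^m, i.e., ‖B^{(0,1)}(b)‖₂² = m and ⟨𝟏, B^{(0,1)}(b)⟩ = 0. -/

import Mathlib

open scoped RealInnerProductSpace

/-- The empirical mean of the batch `b`. -/
noncomputable def bnMean (m : ℕ) (b : EuclideanSpace ℝ (Fin m)) : ℝ :=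
  (∑ i, b i) / m

/-- The empirical variance `σ_b²` of the batch `b`. -/
noncomputable def bnVar (m : ℕ) (b : EuclideanSpace ℝ (Fin m)) : ℝ :=
  (∑ i, (b i - bnMean m b) ^ 2) / m

/-- The batch normalization map `B^{(β,γ)}(b)_i = γ·(b_i − μ_b)/σ_b + β`. -/
noncomputable def bn (m : ℕ) (β γ : ℝ) (b : EuclideanSpace ℝ (Fin m)) :
    EuclideanSpace ℝ (Fin m) :=
  WithLp.toLp 2 (fun i => γ * (b i - bnMean m b) / Real.sqrt (bnVar m b) + β)

/-- The all-ones vector `𝟏 ∈ ℝ^m`. -/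
noncomputable def onesVec (m : ℕ) : EuclideanSpace ℝ (Fin m) := WithLp.toLp 2 (fun _ => 1)

section Aux

variable (m : ℕ) (β γ : ℝ) (b : EuclideanSpace ℝ (Fin m))

/-- The derivative of the empirical mean, as a continuous linear map. -/
noncomputable abbrev bnLmu : EuclideanSpace ℝ (Fin m) →L[ℝ] ℝ :=
  (m:ℝ)⁻¹ • ∑ i, EuclideanSpace.proj (𝕜 := ℝ) i

/-- The derivative of the empirical variance at `b`, as a continuous linear map. -/
noncomputable abbrev bnLV : EuclideanSpace ℝ (Fin m) →L[ℝ] ℝ :=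
  (m:ℝ)⁻¹ • ∑ i, ((2:ℝ) * (b i - bnMean m b)) •
      ((EuclideanSpace.proj (𝕜 := ℝ) i) - bnLmu m)

theorem bn_hmu : HasFDerivAt (fun b' : EuclideanSpace ℝ (Fin m) => bnMean m b') (bnLmu m) b := by
  have h : HasFDerivAt (fun b' : EuclideanSpace ℝ (Fin m) => ∑ i, b' i)
      (∑ i : Fin m, (EuclideanSpace.proj (𝕜 := ℝ) i)) b :=
    HasFDerivAt.fun_sum (fun i _ => (EuclideanSpace.proj (𝕜 := ℝ) i).hasFDerivAt)
  have h2 := h.mul_const (m:ℝ)⁻¹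
  simp only [div_eq_mul_inv, bnMean]
  convert h2 using 1 <;> rfl

theorem bn_hV : HasFDerivAt (fun b' : EuclideanSpace ℝ (Fin m) => bnVar m b') (bnLV m b) b := by
  have h1 : ∀ i : Fin m, HasFDerivAt
      (fun b' : EuclideanSpace ℝ (Fin m) => (b' i - bnMean m b') ^ 2)
      (((2:ℝ) * (b i - bnMean m b)) • ((EuclideanSpace.proj (𝕜 := ℝ) i) - bnLmu m)) b := by
    intro i
    have hg : HasFDerivAt (fun b' : EuclideanSpace ℝ (Fin m) => b' i - bnMean m b')
        ((EuclideanSpace.proj (𝕜 := ℝ) i) - bnLmu m) b :=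
      (EuclideanSpace.proj (𝕜 := ℝ) i).hasFDerivAt.sub (bn_hmu m b)
    have := (hasDerivAt_pow 2 (b i - bnMean m b)).comp_hasFDerivAt b hg
    simp at this
    exact this
  have hsum := HasFDerivAt.fun_sum (fun i (_ : i ∈ Finset.univ) => h1 i)
  have h2 := hsum.mul_const (m:ℝ)⁻¹
  simp only [div_eq_mul_inv, bnVar]
  convert h2 using 1 <;> rfl

/-- The `i`-th coordinate of the Jacobian of batch normalization at `b`. -/
noncomputable abbrev bnDco (i : Fin m) : EuclideanSpace ℝ (Fin m) →L[ℝ] ℝ :=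
  (γ * (b i - bnMean m b)) •
      ((-((Real.sqrt (bnVar m b)) ^ 2)⁻¹) •
        ((1 / (2 * Real.sqrt (bnVar m b))) • bnLV m b))
    + ((Real.sqrt (bnVar m b))⁻¹) • (γ • ((EuclideanSpace.proj (𝕜 := ℝ) i) - bnLmu m))

theorem bn_hco (hσ : 0 < bnVar m b) (i : Fin m) :
    HasFDerivAt (fun b' : EuclideanSpace ℝ (Fin m) =>
        γ * (b' i - bnMean m b') / Real.sqrt (bnVar m b') + β) (bnDco m γ b i) b := by
  have hσ0 : 0 < Real.sqrt (bnVar m b) := Real.sqrt_pos.mpr hσ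
  have hsqrt : HasFDerivAt (fun b' : EuclideanSpace ℝ (Fin m) => Real.sqrt (bnVar m b'))
      ((1 / (2 * Real.sqrt (bnVar m b))) • bnLV m b) b := (bn_hV m b).sqrt hσ.ne'
  have hinv := (hasDerivAt_inv hσ0.ne').comp_hasFDerivAt b hsqrt
  have hc : HasFDerivAt (fun b' : EuclideanSpace ℝ (Fin m) => γ * (b' i - bnMean m b'))
      (γ • ((EuclideanSpace.proj (𝕜 := ℝ) i) - bnLmu m)) b :=
    ((EuclideanSpace.proj (𝕜 := ℝ) i).hasFDerivAt.sub (bn_hmu m b)).const_mul γ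
  have hmul := (hc.mul hinv).add_const β
  simp only [div_eq_mul_inv]
  convert hmul using 1 <;> rfl

theorem bn_hasFDerivAt (hσ : 0 < bnVar m b) :
    HasFDerivAt (bn m β γ)
      (((PiLp.continuousLinearEquiv 2 ℝ (fun _ : Fin m => ℝ)).symm :
          (Fin m → ℝ) →L[ℝ] EuclideanSpace ℝ (Fin m)).comp
        (ContinuousLinearMap.pi (fun i => bnDco m γ b i))) b := by
  have hΦ : HasFDerivAt (fun b' : EuclideanSpace ℝ (Fin m) => (fun i =>
        γ * (b' i - bnMean m b') / Real.sqrt (bnVar m b') + β : Fin m → ℝ))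
      (ContinuousLinearMap.pi (fun i => bnDco m γ b i)) b :=
    hasFDerivAt_pi.2 (fun i => bn_hco m β γ b hσ i)
  exact (((PiLp.continuousLinearEquiv 2 ℝ (fun _ : Fin m => ℝ)).symm :
      (Fin m → ℝ) →L[ℝ] EuclideanSpace ℝ (Fin m)).hasFDerivAt).comp b hΦ

end Aux

/-- The Jacobian of batch normalization at `b` equals
`(γ/σ_b)·(I_m − (1/m)·𝟏𝟏ᵀ − (1/m)·B^{(0,1)}(b)·B^{(0,1)}(b)ᵀ)`, and the vectors
`𝟏/√m` and `B^{(0,1)}(b)/√m` form an orthonormal set. -/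
theorem batchnorm_jacobian
    (m : ℕ) (hm : 2 ≤ m) (β γ : ℝ)
    (b : EuclideanSpace ℝ (Fin m)) (hσ : 0 < bnVar m b) :
    (∀ v : EuclideanSpace ℝ (Fin m),
      fderiv ℝ (bn m β γ) b v
        = (γ / Real.sqrt (bnVar m b)) •
            (v - ((∑ i, v i) / m) • onesVec m
               - (⟪bn m 0 1 b, v⟫ / m) • bn m 0 1 b)) ∧
    ‖bn m 0 1 b‖ ^ 2 = m ∧
    ⟪onesVec m, bn m 0 1 b⟫ = 0 := by
  have hm0 : (m:ℝ) ≠ 0 := by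
    have : (0:ℝ) < m := by exact_mod_cast (by omega : 0 < m)
    exact this.ne'
  have hσ0 : 0 < Real.sqrt (bnVar m b) := Real.sqrt_pos.mpr hσ
  have hσ2 : Real.sqrt (bnVar m b) ^ 2 = bnVar m b := Real.sq_sqrt hσ.le
  have hcenter : ∑ i, (b i - bnMean m b) = 0 := by
    rw [Finset.sum_sub_distrib]
    simp [bnMean]
    field_simp
    ring
  have hsumsq : ∑ i, (b i - bnMean m b) ^ 2 = m * bnVar m b := by
    rw [bnVar]; field_simp
  have hn : ∀ i, bn m 0 1 b i = (b i - bnMean m b) / Real.sqrt (bnVar m b) := by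
    intro i; simp [bn]
  refine ⟨?_, ?_, ?_⟩
  · intro v
    rw [(bn_hasFDerivAt m β γ b hσ).fderiv]
    ext i
    simp only [ContinuousLinearMap.coe_comp', Function.comp_apply,
      ContinuousLinearEquiv.coe_coe, PiLp.continuousLinearEquiv_symm_apply,
      PiLp.toLp_apply, ContinuousLinearMap.pi_apply, bnDco, bnLV, bnLmu,
      ContinuousLinearMap.add_apply, ContinuousLinearMap.smul_apply,
      ContinuousLinearMap.sum_apply, ContinuousLinearMap.sub_apply, PiLp.proj_apply,
      smul_eq_mul, PiLp.smul_apply, PiLp.sub_apply, onesVec, bn, PiLp.inner_apply,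
      RCLike.inner_apply, conj_trivial]
    have hLV : ∑ j, 2 * (b j - bnMean m b) * (v j - (m:ℝ)⁻¹ * ∑ k, v k)
        = 2 * ∑ j, (b j - bnMean m b) * v j := by
      have : ∀ j, 2 * (b j - bnMean m b) * (v j - (m:ℝ)⁻¹ * ∑ k, v k)
          = 2 * ((b j - bnMean m b) * v j)
            - (2 * (m:ℝ)⁻¹ * ∑ k, v k) * (b j - bnMean m b) := by intro j; ring
      simp only [this, Finset.sum_sub_distrib, ← Finset.mul_sum, hcenter]
      ring
    have hinner : ∑ x, (1 * (b x - bnMean m b) / Real.sqrt (bnVar m b) + 0) * v x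
        = (∑ x, (b x - bnMean m b) * v x) / Real.sqrt (bnVar m b) := by
      simp only [one_mul, add_zero, div_mul_eq_mul_div, Finset.sum_div]
    rw [hLV, show ∑ x, v x * (1 * (b x - bnMean m b) / Real.sqrt (bnVar m b) + 0)
        = ∑ x, (1 * (b x - bnMean m b) / Real.sqrt (bnVar m b) + 0) * v x from
        Finset.sum_congr rfl (fun x _ => mul_comm _ _), hinner]
    set s := Real.sqrt (bnVar m b) with hs
    field_simp
    ring
  · rw [EuclideanSpace.norm_eq, Real.sq_sqrt (by positivity)]
    calc ∑ i, ‖bn m 0 1 b i‖ ^ 2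
        = ∑ i, (b i - bnMean m b) ^ 2 / Real.sqrt (bnVar m b) ^ 2 := by
          simp [hn, div_pow, sq_abs]
      _ = (m * bnVar m b) / Real.sqrt (bnVar m b) ^ 2 := by rw [← Finset.sum_div, hsumsq]
      _ = m := by rw [hσ2]; field_simp
  · simp [PiLp.inner_apply, onesVec, hn, ← Finset.sum_div, hcenter]
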